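/- arXiv:1806.02838 — 3 statements merged into one kernel-verified Lean document; each statement's English description precedes it below -/
import Mathlib

section
/- Let G be a bipartite graph with bipartition (A, B), and set d_A = e(G)/|A| and d_B = e(G)/|B|. Then there exists a subgraph G' of G with e(G') ≥ e(G)/2 such that every vertex of V(G') ∩ A has degree at least d_A/4 in G' and every vertex of V(G') ∩ B has degree at least d_B/4 in G'. -/
open SimpleGraph

private lemma diff_subset_image {V : Type*} {G : SimpleGraph V} (H : G.Subgraph) (v : V) :
    H.edgeSet \ (H.deleteVerts {v}).edgeSet ⊆ (fun w => s(v, w)) '' (H.neighborSet v) := by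
  rintro e ⟨he, hne⟩
  induction e using Sym2.ind with
  | _ x y =>
    rw [Subgraph.mem_edgeSet] at he
    have hx := H.edge_vert he
    have hy := H.edge_vert he.symm
    rw [Subgraph.mem_edgeSet, Subgraph.deleteVerts_adj] at hne
    by_cases hxv : x = v
    · subst hxv
      exact ⟨y, he, rfl⟩
    · by_cases hyv : y = v
      · subst hyv
        exact ⟨x, he.symm, Sym2.eq_swap⟩
      · exact absurd ⟨hx, by simp [hxv], hy, by simp [hyv], he⟩ hne

private lemma edge_count_delete {V : Type*} [Fintype V] {G : SimpleGraph V} (H : G.Subgraph)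
    (v : V) :
    (H.edgeSet.ncard : ℝ) ≤ ((H.deleteVerts {v}).edgeSet.ncard : ℝ)
      + ((H.neighborSet v).ncard : ℝ) := by
  have hsub : (H.deleteVerts {v}).edgeSet ⊆ H.edgeSet :=
    Subgraph.edgeSet_mono (Subgraph.deleteVerts_le)
  have h1 : (H.edgeSet \ (H.deleteVerts {v}).edgeSet).ncard
      + (H.deleteVerts {v}).edgeSet.ncard = H.edgeSet.ncard :=
    Set.ncard_diff_add_ncard_of_subset hsub (Set.toFinite _)
  have h2 : (H.edgeSet \ (H.deleteVerts {v}).edgeSet).ncard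
      ≤ (H.neighborSet v).ncard := by
    calc (H.edgeSet \ (H.deleteVerts {v}).edgeSet).ncard
        ≤ ((fun w => s(v, w)) '' (H.neighborSet v)).ncard :=
          Set.ncard_le_ncard (diff_subset_image H v) (Set.toFinite _)
      _ ≤ (H.neighborSet v).ncard := Set.ncard_image_le (Set.toFinite _)
  have h3 : H.edgeSet.ncard ≤ (H.deleteVerts {v}).edgeSet.ncard + (H.neighborSet v).ncard := by
    omega
  exact_mod_cast h3

private lemma aux_induction {V : Type*} [Fintype V] (G : SimpleGraph V) (A B : Set V)
    (a b : ℝ) (hdisj : Disjoint A B) :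
    ∀ n : ℕ, ∀ H : G.Subgraph, H.verts.ncard ≤ n →
    ∃ H' : G.Subgraph, H' ≤ H ∧
      (H.edgeSet.ncard : ℝ)
        - a * (((H.verts ∩ A).ncard : ℝ) - ((H'.verts ∩ A).ncard : ℝ))
        - b * (((H.verts ∩ B).ncard : ℝ) - ((H'.verts ∩ B).ncard : ℝ))
        ≤ (H'.edgeSet.ncard : ℝ) ∧
      (∀ v ∈ H'.verts ∩ A, a ≤ ((H'.neighborSet v).ncard : ℝ)) ∧
      (∀ v ∈ H'.verts ∩ B, b ≤ ((H'.neighborSet v).ncard : ℝ)) := by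
  intro n
  induction n with
  | zero =>
    intro H hcard
    refine ⟨H, le_refl _, by simp, ?_, ?_⟩
    all_goals
      intro v hv
      exfalso
      have : H.verts = ∅ := by
        have := Set.ncard_eq_zero (Set.toFinite H.verts) |>.mp (Nat.le_zero.mp hcard)
        exact this
      rw [this] at hv
      simp at hv
  | succ n ih =>
    intro H hcard
    by_cases hgood : (∀ v ∈ H.verts ∩ A, a ≤ ((H.neighborSet v).ncard : ℝ)) ∧
        (∀ v ∈ H.verts ∩ B, b ≤ ((H.neighborSet v).ncard : ℝ))
    · exact ⟨H, le_refl _, by simp, hgood.1, hgood.2⟩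
    · -- there is a bad vertex
      rw [not_and_or] at hgood
      have hbad : ∃ v ∈ H.verts, (v ∈ A ∧ ((H.neighborSet v).ncard : ℝ) < a) ∨
          (v ∈ B ∧ ((H.neighborSet v).ncard : ℝ) < b) := by
        rcases hgood with h | h
        · push_neg at h
          obtain ⟨v, ⟨hv1, hv2⟩, hv3⟩ := h
          exact ⟨v, hv1, Or.inl ⟨hv2, hv3⟩⟩
        · push_neg at h
          obtain ⟨v, ⟨hv1, hv2⟩, hv3⟩ := h
          exact ⟨v, hv1, Or.inr ⟨hv2, hv3⟩⟩
      obtain ⟨v, hvH, hvbad⟩ := hbad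
      set H₂ := H.deleteVerts {v} with hH₂
      have hverts : H₂.verts = H.verts \ {v} := Subgraph.deleteVerts_verts
      have hcard2 : H₂.verts.ncard ≤ n := by
        rw [hverts, Set.ncard_diff_singleton_of_mem hvH]
        have h1 : 1 ≤ H.verts.ncard := (Set.ncard_pos (Set.toFinite _)).mpr ⟨v, hvH⟩
        omega
      obtain ⟨H', hle, hbound, hA, hB⟩ := ih H₂ hcard2
      refine ⟨H', hle.trans Subgraph.deleteVerts_le, ?_, hA, hB⟩
      have hedge := edge_count_delete H v
      rcases hvbad with ⟨hvA, hdeg⟩ | ⟨hvB, hdeg⟩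
      · -- v ∈ A
        have hvB : v ∉ B := fun h => hdisj.ne_of_mem hvA h rfl
        have hA2 : H₂.verts ∩ A = (H.verts ∩ A) \ {v} := by
          rw [hverts]; ext x; simp; tauto
        have hB2 : H₂.verts ∩ B = H.verts ∩ B := by
          rw [hverts]; ext x
          simp only [Set.mem_inter_iff, Set.mem_diff, Set.mem_singleton_iff]
          constructor
          · rintro ⟨⟨h1, _⟩, h2⟩; exact ⟨h1, h2⟩
          · rintro ⟨h1, h2⟩
            exact ⟨⟨h1, fun hx => hvB (hx ▸ h2)⟩, h2⟩
        have hvm : v ∈ H.verts ∩ A := ⟨hvH, hvA⟩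
        have hone : 1 ≤ (H.verts ∩ A).ncard :=
          (Set.ncard_pos (Set.toFinite _)).mpr ⟨v, hvm⟩
        have hcA : ((H₂.verts ∩ A).ncard : ℝ) = ((H.verts ∩ A).ncard : ℝ) - 1 := by
          rw [hA2, Set.ncard_diff_singleton_of_mem hvm]
          push_cast [Nat.cast_sub hone]
          ring
        rw [hB2] at hbound
        rw [hcA] at hbound
        have hring : a * (((H.verts ∩ A).ncard : ℝ) - ((H'.verts ∩ A).ncard : ℝ))
            = a * ((((H.verts ∩ A).ncard : ℝ) - 1) - ((H'.verts ∩ A).ncard : ℝ)) + a := by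
          ring
        linarith
      · -- v ∈ B
        have hvA : v ∉ A := fun h => hdisj.ne_of_mem h hvB rfl
        have hB2 : H₂.verts ∩ B = (H.verts ∩ B) \ {v} := by
          rw [hverts]; ext x; simp; tauto
        have hA2 : H₂.verts ∩ A = H.verts ∩ A := by
          rw [hverts]; ext x
          simp only [Set.mem_inter_iff, Set.mem_diff, Set.mem_singleton_iff]
          constructor
          · rintro ⟨⟨h1, _⟩, h2⟩; exact ⟨h1, h2⟩
          · rintro ⟨h1, h2⟩
            exact ⟨⟨h1, fun hx => hvA (hx ▸ h2)⟩, h2⟩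
        have hvm : v ∈ H.verts ∩ B := ⟨hvH, hvB⟩
        have hone : 1 ≤ (H.verts ∩ B).ncard :=
          (Set.ncard_pos (Set.toFinite _)).mpr ⟨v, hvm⟩
        have hcB : ((H₂.verts ∩ B).ncard : ℝ) = ((H.verts ∩ B).ncard : ℝ) - 1 := by
          rw [hB2, Set.ncard_diff_singleton_of_mem hvm]
          push_cast [Nat.cast_sub hone]
          ring
        rw [hA2] at hbound
        rw [hcB] at hbound
        have hring : b * (((H.verts ∩ B).ncard : ℝ) - ((H'.verts ∩ B).ncard : ℝ))
            = b * ((((H.verts ∩ B).ncard : ℝ) - 1) - ((H'.verts ∩ B).ncard : ℝ)) + b := by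
          ring
        linarith

/-- Let `G` be a bipartite graph with bipartition `(A, B)`, and set `d_A = e(G)/|A|`,
`d_B = e(G)/|B|`. Then `G` has a subgraph `G'` with `e(G') ≥ e(G)/2` in which every vertex
of `V(G') ∩ A` has degree at least `d_A/4` and every vertex of `V(G') ∩ B` has degree at
least `d_B/4`. -/
theorem min_degree_bipartite_subgraph {V : Type*} [Fintype V] (G : SimpleGraph V)
    (A B : Set V) (hdisj : Disjoint A B) (hcover : A ∪ B = Set.univ)
    (hbip : ∀ ⦃u v⦄, G.Adj u v → (u ∈ A ∧ v ∈ B) ∨ (u ∈ B ∧ v ∈ A)) :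
    ∃ G' : G.Subgraph,
      (G.edgeSet.ncard : ℝ) / 2 ≤ (G'.edgeSet.ncard : ℝ) ∧
      (∀ v ∈ G'.verts ∩ A,
        (G.edgeSet.ncard : ℝ) / A.ncard / 4 ≤ ((G'.neighborSet v).ncard : ℝ)) ∧
      (∀ v ∈ G'.verts ∩ B,
        (G.edgeSet.ncard : ℝ) / B.ncard / 4 ≤ ((G'.neighborSet v).ncard : ℝ)) := by
  set e : ℝ := (G.edgeSet.ncard : ℝ) with he
  have he0 : 0 ≤ e := Nat.cast_nonneg _
  set a : ℝ := e / A.ncard / 4 with ha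
  set b : ℝ := e / B.ncard / 4 with hb
  have ha0 : 0 ≤ a := by positivity
  have hb0 : 0 ≤ b := by positivity
  obtain ⟨H', hle, hbound, hA, hB⟩ :=
    aux_induction G A B a b hdisj ((⊤ : G.Subgraph).verts.ncard) ⊤ le_rfl
  refine ⟨H', ?_, hA, hB⟩
  have hvertsTop : (⊤ : G.Subgraph).verts = Set.univ := rfl
  have hedgeTop : (⊤ : G.Subgraph).edgeSet = G.edgeSet := Subgraph.edgeSet_top
  rw [hvertsTop, Set.univ_inter, Set.univ_inter, hedgeTop] at hbound
  have haA : a * (A.ncard : ℝ) ≤ e / 4 := by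
    rcases Nat.eq_zero_or_pos A.ncard with h | h
    · rw [h]; simp; positivity
    · have : (A.ncard : ℝ) ≠ 0 := by positivity
      have heq : a * (A.ncard : ℝ) = e / 4 := by
        rw [ha]; field_simp
      linarith
  have hbB : b * (B.ncard : ℝ) ≤ e / 4 := by
    rcases Nat.eq_zero_or_pos B.ncard with h | h
    · rw [h]; simp; positivity
    · have : (B.ncard : ℝ) ≠ 0 := by positivity
      have heq : b * (B.ncard : ℝ) = e / 4 := by
        rw [hb]; field_simp
      linarith
  have hA' : (0 : ℝ) ≤ ((H'.verts ∩ A).ncard : ℝ) := Nat.cast_nonneg _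
  have hB' : (0 : ℝ) ≤ ((H'.verts ∩ B).ncard : ℝ) := Nat.cast_nonneg _
  nlinarith [mul_nonneg ha0 hA', mul_nonneg hb0 hB']
end

section
/- Let t be a positive integer and let G be an n-vertex bipartite graph with at least 4tn edges. Then the number of t-matchings in G (sets of t pairwise disjoint edges) is at least e(G)^t / (2^t · t!). -/
open SimpleGraph Finset

/-- A `t`-matching in `G`: a set of `t` pairwise vertex-disjoint edges of `G`. -/
def IsMatchingIn {V : Type*} (G : SimpleGraph V) (t : ℕ) (M : Finset (Sym2 V)) : Prop :=
  M.card = t ∧ ↑M ⊆ G.edgeSet ∧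
    (M : Set (Sym2 V)).Pairwise fun e f => ∀ x : V, ¬(x ∈ e ∧ x ∈ f)

namespace MatchAux

/-- Two edges are vertex-disjoint. -/
def EDisj {V : Type*} (e f : Sym2 V) : Prop := ∀ x : V, ¬(x ∈ e ∧ x ∈ f)

lemma EDisj.symm {V : Type*} {e f : Sym2 V} (h : EDisj e f) : EDisj f e :=
  fun x hx => h x ⟨hx.2, hx.1⟩

lemma not_mem_of_edisj {V : Type*} {M : Finset (Sym2 V)} {f : Sym2 V}
    (h : ∀ g ∈ M, EDisj f g) : f ∉ M := by
  intro hf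
  induction f using Sym2.ind with
  | _ a b => exact h _ hf a ⟨Sym2.mem_mk_left a b, Sym2.mem_mk_left a b⟩

variable {V : Type*} [Fintype V] [DecidableEq V] (G : SimpleGraph V) [DecidableRel G.Adj]

lemma matchingIn_insert {k : ℕ} {M : Finset (Sym2 V)} {f : Sym2 V}
    (hM : IsMatchingIn G k M) (hf : f ∈ G.edgeSet) (hD : ∀ g ∈ M, EDisj f g) :
    IsMatchingIn G (k + 1) (insert f M) := by
  obtain ⟨hcard, hsub, hpw⟩ := hM
  have hfM : f ∉ M := not_mem_of_edisj hD
  refine ⟨by rw [card_insert_of_notMem hfM, hcard], ?_, ?_⟩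
  · rw [coe_insert]
    exact Set.insert_subset hf hsub
  · rw [coe_insert]
    exact hpw.insert (fun g hg _ => ⟨hD g hg, (hD g hg).symm⟩)

lemma matchingIn_erase {k : ℕ} {M : Finset (Sym2 V)} {f : Sym2 V}
    (hM : IsMatchingIn G (k + 1) M) (hf : f ∈ M) :
    IsMatchingIn G k (M.erase f) ∧ f ∈ G.edgeSet ∧ ∀ g ∈ M.erase f, EDisj f g := by
  obtain ⟨hcard, hsub, hpw⟩ := hM
  refine ⟨⟨by rw [card_erase_of_mem hf, hcard]; rfl,
      Set.Subset.trans (by exact_mod_cast coe_subset.2 (erase_subset f M)) hsub,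
      hpw.mono (by exact_mod_cast coe_subset.2 (erase_subset f M))⟩,
    hsub hf, ?_⟩
  intro g hg
  have hgM := mem_of_mem_erase hg
  have hne : f ≠ g := fun h => (ne_of_mem_erase hg) h.symm
  exact hpw hf hgM hne

open Classical in
/-- The finset of all `k`-matchings in `G`. -/
noncomputable def MSet (k : ℕ) : Finset (Finset (Sym2 V)) :=
  Finset.univ.filter (fun M => IsMatchingIn G k M)

open Classical in
lemma mem_MSet {k : ℕ} {M : Finset (Sym2 V)} : M ∈ MSet G k ↔ IsMatchingIn G k M := by
  simp [MSet]

open Classical in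
/-- The finset of edges extending a given matching. -/
noncomputable def extF (M : Finset (Sym2 V)) : Finset (Sym2 V) :=
  G.edgeFinset.filter (fun f => ∀ g ∈ M, EDisj f g)

lemma count_eq (k : ℕ) :
    (k + 1) * (MSet G (k + 1)).card = ∑ M ∈ MSet G k, (extF G M).card := by
  classical
  have h1 : ((MSet G (k+1)).sigma (fun M' => (M' : Finset (Sym2 V)))).card
      = (k + 1) * (MSet G (k+1)).card := by
    rw [card_sigma]
    rw [Finset.sum_congr rfl (fun M hM => ((mem_MSet G).1 hM).1)]
    rw [sum_const, smul_eq_mul, mul_comm]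
  have h2 : ((MSet G k).sigma (fun M => extF G M)).card
      = ∑ M ∈ MSet G k, (extF G M).card := card_sigma _ _
  rw [← h1, ← h2]
  refine card_bij (fun p _ => ⟨p.1.erase p.2, p.2⟩) ?_ ?_ ?_
  · rintro ⟨M', f⟩ hp
    rw [mem_sigma] at hp ⊢
    obtain ⟨hM', hf⟩ := hp
    obtain ⟨h1, h2, h3⟩ := matchingIn_erase G ((mem_MSet G).1 hM') hf
    exact ⟨(mem_MSet G).2 h1, mem_filter.2 ⟨mem_edgeFinset.2 h2, h3⟩⟩
  · rintro ⟨M, f⟩ hp ⟨M', f'⟩ hq h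
    rw [mem_sigma] at hp hq
    simp only at hp hq
    have hsnd : f = f' := congrArg (fun p : (_ : Finset (Sym2 V)) × Sym2 V => p.2) h
    subst hsnd
    have hfst : M.erase f = M'.erase f :=
      congrArg (fun p : (_ : Finset (Sym2 V)) × Sym2 V => p.1) h
    have : M = M' := by rw [← insert_erase hp.2, ← insert_erase hq.2, hfst]
    subst this
    rfl
  · rintro ⟨M, f⟩ hq
    rw [mem_sigma] at hq
    obtain ⟨hM, hf⟩ := hq
    simp only at hM hf
    simp only [extF, mem_filter, mem_edgeFinset] at hf
    have hfM : f ∉ M := not_mem_of_edisj hf.2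
    have hmem : (⟨insert f M, f⟩ : (_ : Finset (Sym2 V)) × Sym2 V)
        ∈ (MSet G (k+1)).sigma (fun M' => (M' : Finset (Sym2 V))) := by
      rw [mem_sigma]
      exact ⟨(mem_MSet G).2 (matchingIn_insert G ((mem_MSet G).1 hM) hf.1 hf.2),
        mem_insert_self f M⟩
    refine ⟨⟨insert f M, f⟩, hmem, ?_⟩
    show (⟨(insert f M).erase f, f⟩ : (_ : Finset (Sym2 V)) × Sym2 V) = ⟨M, f⟩
    rw [erase_insert hfM]

lemma ext_lower {k : ℕ} {M : Finset (Sym2 V)} (hM : IsMatchingIn G k M) :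
    G.edgeFinset.card ≤ (extF G M).card + 2 * k * Fintype.card V := by
  classical
  have hdeg : ∀ v : V, (G.edgeFinset.filter (fun f => v ∈ f)).card ≤ Fintype.card V := by
    intro v
    have h1 : (G.edgeFinset.filter (fun f => v ∈ f)).card = G.degree v := by
      rw [← card_incidenceFinset_eq_degree]
      congr 1
      ext e
      simp [incidenceFinset, incidenceSet, Set.mem_toFinset, mem_edgeFinset]
      exact (@Set.mem_toFinset _ {e | e ∈ G.edgeSet ∧ v ∈ e} (G.incidenceSetFintype v) e).symm
    rw [h1]
    exact (degree_lt_card_verts (G := G) v).le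
  set bad := G.edgeFinset.filter (fun f => ¬ ∀ g ∈ M, EDisj f g) with hbad
  have hsplit : (extF G M).card + bad.card = G.edgeFinset.card := by
    rw [extF, hbad]
    convert card_filter_add_card_filter_not
      (s := G.edgeFinset) (p := fun f => ∀ g ∈ M, EDisj f g) using 2
  have hbadle : bad.card ≤ 2 * k * Fintype.card V := by
    have hsub : bad ⊆ M.biUnion (fun g => G.edgeFinset.filter (fun f => ¬ EDisj f g)) := by
      intro f hf
      rw [hbad, mem_filter] at hf
      push_neg at hf
      obtain ⟨hfe, g, hg, hng⟩ := hf
      exact mem_biUnion.2 ⟨g, hg, mem_filter.2 ⟨hfe, hng⟩⟩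
    refine le_trans (card_le_card hsub) (le_trans (card_biUnion_le) ?_)
    have hper : ∀ g ∈ M, (G.edgeFinset.filter (fun f => ¬ EDisj f g)).card
        ≤ 2 * Fintype.card V := by
      intro g _
      induction g using Sym2.ind with
      | _ a b =>
        have hsub2 : G.edgeFinset.filter (fun f => ¬ EDisj f s(a, b))
            ⊆ G.edgeFinset.filter (fun f => a ∈ f) ∪ G.edgeFinset.filter (fun f => b ∈ f) := by
          intro f hf
          rw [mem_filter] at hf
          obtain ⟨hfe, hne⟩ := hf
          rw [EDisj] at hne
          push_neg at hne
          obtain ⟨x, hxf, hxg⟩ := hne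
          rw [Sym2.mem_iff] at hxg
          rcases hxg with h | h
          · exact mem_union_left _ (mem_filter.2 ⟨hfe, h ▸ hxf⟩)
          · exact mem_union_right _ (mem_filter.2 ⟨hfe, h ▸ hxf⟩)
        calc (G.edgeFinset.filter (fun f => ¬ EDisj f s(a, b))).card
            ≤ _ := card_le_card hsub2
          _ ≤ (G.edgeFinset.filter (fun f => a ∈ f)).card
              + (G.edgeFinset.filter (fun f => b ∈ f)).card := card_union_le _ _
          _ ≤ 2 * Fintype.card V := by
              have := hdeg a; have := hdeg b; omega
    calc ∑ g ∈ M, (G.edgeFinset.filter (fun f => ¬ EDisj f g)).card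
        ≤ ∑ _g ∈ M, 2 * Fintype.card V := sum_le_sum hper
      _ = 2 * k * Fintype.card V := by
          rw [sum_const, smul_eq_mul, hM.1]; ring
  omega

lemma empty_matching : IsMatchingIn G 0 (∅ : Finset (Sym2 V)) := by
  refine ⟨card_empty, by simp, by simp⟩

end MatchAux

/-- If `G` is an `n`-vertex bipartite graph with at least `4tn` edges (`t ≥ 1`), then the
number of `t`-matchings in `G` is at least `e(G)^t / (2^t · t!)`. -/
theorem matching_count {V : Type*} [Fintype V] (G : SimpleGraph V) (hbip : G.Colorable 2)
    (t : ℕ) (ht : 1 ≤ t) (he : 4 * t * Fintype.card V ≤ G.edgeSet.ncard) :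
    (G.edgeSet.ncard : ℝ) ^ t / (2 ^ t * t.factorial) ≤
      ({M : Finset (Sym2 V) | IsMatchingIn G t M}.ncard : ℝ) := by
  classical
  set n := Fintype.card V with hn
  have hecard : G.edgeSet.ncard = G.edgeFinset.card := by
    rw [← coe_edgeFinset, Set.ncard_coe_finset]
  rw [hecard] at he ⊢
  set e := G.edgeFinset.card with he'
  have step : ∀ k, k < t →
      e * (MatchAux.MSet G k).card ≤ 2 * ((k + 1) * (MatchAux.MSet G (k + 1)).card) := by
    intro k hk
    rw [MatchAux.count_eq]
    have hper : ∀ M ∈ MatchAux.MSet G k, e ≤ 2 * (MatchAux.extF G M).card := by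
      intro M hM
      have h1 := MatchAux.ext_lower G ((MatchAux.mem_MSet G).1 hM)
      have h2 : 4 * k * n ≤ e :=
        le_trans (Nat.mul_le_mul_right n (Nat.mul_le_mul_left 4 hk.le)) he
      have h1' : e ≤ (MatchAux.extF G M).card + 2 * (k * n) := by
        rw [← mul_assoc]; exact h1
      have h2' : 4 * (k * n) ≤ e := by rw [← mul_assoc]; exact h2
      linarith
    calc e * (MatchAux.MSet G k).card = ∑ _M ∈ MatchAux.MSet G k, e := by
          rw [sum_const, smul_eq_mul, mul_comm]
      _ ≤ ∑ M ∈ MatchAux.MSet G k, 2 * (MatchAux.extF G M).card := sum_le_sum hper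
      _ = 2 * ∑ M ∈ MatchAux.MSet G k, (MatchAux.extF G M).card := by rw [mul_sum]
  have key : ∀ k, k ≤ t →
      ((e : ℝ) / 2) ^ k ≤ (k.factorial : ℝ) * ((MatchAux.MSet G k).card : ℝ) := by
    intro k
    induction k with
    | zero =>
      intro _
      have hmem : (∅ : Finset (Sym2 V)) ∈ MatchAux.MSet G 0 :=
        (MatchAux.mem_MSet G).2 (MatchAux.empty_matching G)
      have hc : 1 ≤ (MatchAux.MSet G 0).card := card_pos.2 ⟨∅, hmem⟩
      simp only [pow_zero, Nat.factorial_zero, Nat.cast_one, one_mul]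
      exact_mod_cast hc
    | succ k ih =>
      intro hk1
      have hkt : k < t := lt_of_lt_of_le (Nat.lt_succ_self k) hk1
      have ih' := ih hkt.le
      have hstepR : (e : ℝ) * ((MatchAux.MSet G k).card : ℝ)
          ≤ 2 * ((k + 1) * ((MatchAux.MSet G (k + 1)).card : ℝ)) := by
        exact_mod_cast step k hkt
      have hfacpos : (0 : ℝ) ≤ (k.factorial : ℝ) := by positivity
      have he2 : (0 : ℝ) ≤ (e : ℝ) / 2 := by positivity
      have hfs : ((k + 1).factorial : ℝ) = (k + 1) * (k.factorial : ℝ) := by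
        rw [Nat.factorial_succ]; push_cast; ring
      calc ((e : ℝ) / 2) ^ (k + 1) = ((e : ℝ) / 2) ^ k * ((e : ℝ) / 2) := pow_succ _ _
        _ ≤ ((k.factorial : ℝ) * ((MatchAux.MSet G k).card : ℝ)) * ((e : ℝ) / 2) :=
            mul_le_mul_of_nonneg_right ih' he2
        _ ≤ ((k + 1).factorial : ℝ) * ((MatchAux.MSet G (k + 1)).card : ℝ) := by
            rw [hfs]; nlinarith
  have key' := key t le_rfl
  have hset : {M : Finset (Sym2 V) | IsMatchingIn G t M} = ↑(MatchAux.MSet G t) := by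
    ext M; simp [MatchAux.mem_MSet]
  rw [hset, Set.ncard_coe_finset]
  rw [div_pow] at key'
  rw [← div_div, div_le_iff₀ (by positivity : (0 : ℝ) < (t.factorial : ℝ))]
  linarith
end

section
/- For all integers m, n ≥ 2 and p ≥ 2, z(m, n, θ_{3,p}) ≤ 144 p^3 · ((mn)^{2/3} + m + n). -/
set_option maxHeartbeats 1000000

open SimpleGraph Filter

/-- `G` contains a copy of `H` (an injective graph homomorphism from `H` to `G`). -/
def SimpleGraph.Contains {α β : Type*} (G : SimpleGraph α) (H : SimpleGraph β) : Prop :=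
  ∃ f : H →g G, Function.Injective f

/-- The theta graph `θ_{k,p}` (for `k ≥ 2`): `p` internally disjoint paths of length `k`
joining the two endpoints `Sum.inl false` and `Sum.inl true`; the internal vertices of the
`i`-th path are `(i, 0), …, (i, k-2)`. -/
def thetaGraph (k p : ℕ) : SimpleGraph (Bool ⊕ (Fin p × Fin (k - 1))) :=
  SimpleGraph.fromRel fun x y =>
    match x, y with
    | Sum.inl b, Sum.inr (_, j) => (b = false ∧ (j : ℕ) = 0) ∨ (b = true ∧ (j : ℕ) = k - 2)
    | Sum.inr (i, j), Sum.inr (ii, jj) => i = ii ∧ (jj : ℕ) = (j : ℕ) + 1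
    | _, _ => False

/-- The asymmetric bipartite Turán number `z(m, n, H)`: the maximum number of edges in a
bipartite graph with parts of sizes `m` and `n` containing no copy of `H`. -/
noncomputable def zNum {β : Type*} (m n : ℕ) (H : SimpleGraph β) : ℕ :=
  sSup {N : ℕ | ∃ G : SimpleGraph (Fin m ⊕ Fin n),
    G ≤ completeBipartiteGraph (Fin m) (Fin n) ∧ ¬ G.Contains H ∧ G.edgeSet.ncard = N}

namespace ThetaAux

open Finset

variable {m n : ℕ}

/-- The right-neighborhood of a left vertex. -/
def NA (F : Finset (Fin m × Fin n)) (a : Fin m) : Finset (Fin n) :=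
  Finset.univ.filter fun x => (a, x) ∈ F

/-- The left-neighborhood of a right vertex. -/
def NB (F : Finset (Fin m × Fin n)) (b : Fin n) : Finset (Fin m) :=
  Finset.univ.filter fun y => (y, b) ∈ F

@[simp] lemma mem_NA {F : Finset (Fin m × Fin n)} {a : Fin m} {x : Fin n} :
    x ∈ NA F a ↔ (a, x) ∈ F := by simp [NA]

@[simp] lemma mem_NB {F : Finset (Fin m × Fin n)} {b : Fin n} {y : Fin m} :
    y ∈ NB F b ↔ (y, b) ∈ F := by simp [NB]

/-- A theta-graph configuration inside the bipartite edge set `E`: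
endpoints `u` (left) and `v` (right), with `p` internally disjoint paths
`u - x i - y i - v`. -/
def HasTheta (p : ℕ) (E : Finset (Fin m × Fin n)) : Prop :=
  ∃ (u : Fin m) (v : Fin n) (x : Fin p → Fin n) (y : Fin p → Fin m),
    Function.Injective x ∧ Function.Injective y ∧ (∀ i, x i ≠ v) ∧ (∀ i, y i ≠ u) ∧
    ∀ i, (u, x i) ∈ E ∧ (y i, x i) ∈ E ∧ (y i, v) ∈ E

lemma hasTheta_mono {p : ℕ} {E F : Finset (Fin m × Fin n)} (h : E ⊆ F) :
    HasTheta p E → HasTheta p F := by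
  rintro ⟨u, v, x, y, h1, h2, h3, h4, h5⟩
  exact ⟨u, v, x, y, h1, h2, h3, h4,
    fun i => ⟨h (h5 i).1, h (h5 i).2.1, h (h5 i).2.2⟩⟩

lemma hasTheta_of_pairs {p : ℕ} {E : Finset (Fin m × Fin n)} (u : Fin m) (v : Fin n)
    (M : Finset (Fin n × Fin m)) (hcard : M.card = p)
    (hdisj : ∀ s ∈ M, ∀ t ∈ M, s ≠ t → s.1 ≠ t.1 ∧ s.2 ≠ t.2)
    (hmem : ∀ s ∈ M, s.1 ≠ v ∧ s.2 ≠ u ∧ (u, s.1) ∈ E ∧ (s.2, s.1) ∈ E ∧ (s.2, v) ∈ E) :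
    HasTheta p E := by
  have hM : Fintype.card {s // s ∈ M} = p := by simp [hcard]
  let e : Fin p ≃ {s // s ∈ M} := (Fintype.equivFinOfCardEq hM).symm
  have hne : ∀ i j : Fin p, i ≠ j → ((e i : Fin n × Fin m) ≠ (e j : Fin n × Fin m)) := by
    intro i j hij hval
    exact hij (e.injective (Subtype.ext hval))
  refine ⟨u, v, fun i => (e i : Fin n × Fin m).1, fun i => (e i : Fin n × Fin m).2,
    ?_, ?_, ?_, ?_, ?_⟩
  · intro i j h
    by_contra hij
    exact (hdisj _ (e i).2 _ (e j).2 (hne i j hij)).1 h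
  · intro i j h
    by_contra hij
    exact (hdisj _ (e i).2 _ (e j).2 (hne i j hij)).2 h
  · exact fun i => (hmem _ (e i).2).1
  · exact fun i => (hmem _ (e i).2).2.1
  · exact fun i => (hmem _ (e i).2).2.2

/-- The "rich neighbour" lemma: for fixed `u` (left) and `v` (right), the number of
left vertices `y ≠ u` adjacent to `v` whose codegree with `u` is at least `p+1`
is at most `p - 1`, in a theta-free graph. -/
lemma rich_bound {p : ℕ} (hp : 1 ≤ p) {F : Finset (Fin m × Fin n)}
    (hnt : ¬ HasTheta p F) (u : Fin m) (v : Fin n) :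
    ((Finset.univ : Finset (Fin m)).filter fun y =>
      y ≠ u ∧ (y, v) ∈ F ∧ p + 1 ≤ (NA F u ∩ NA F y).card).card ≤ p - 1 := by
  by_contra hcon
  have hge : p ≤ ((Finset.univ : Finset (Fin m)).filter fun y =>
      y ≠ u ∧ (y, v) ∈ F ∧ p + 1 ≤ (NA F u ∩ NA F y).card).card := by omega
  obtain ⟨Y, hYsub, hYcard⟩ := Finset.exists_subset_card_eq hge
  have hYmem : ∀ y ∈ Y, y ≠ u ∧ (y, v) ∈ F ∧ p + 1 ≤ (NA F u ∩ NA F y).card := by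
    intro y hy
    have := hYsub hy
    simpa using this
  set t : {y // y ∈ Y} → Finset (Fin n) := fun y => (NA F u ∩ NA F (y : Fin m)).erase v with ht
  have htcard : ∀ y : {y // y ∈ Y}, p ≤ (t y).card := by
    intro y
    have h1 := (hYmem _ y.2).2.2
    have h2 := Finset.card_erase_of_mem (s := NA F u ∩ NA F (y : Fin m)) (a := v)
    by_cases hv : v ∈ NA F u ∩ NA F (y : Fin m)
    · rw [ht]; simp only []; rw [Finset.card_erase_of_mem hv]; omega
    · rw [ht]; simp only []; rw [Finset.erase_eq_of_notMem hv]; omega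
  have hall : ∀ s : Finset {y // y ∈ Y}, s.card ≤ (s.biUnion t).card := by
    intro s
    rcases s.eq_empty_or_nonempty with rfl | ⟨y₀, hy₀⟩
    · simp
    · have h1 : s.card ≤ p := by
        calc s.card ≤ (Finset.univ : Finset {y // y ∈ Y}).card := Finset.card_le_univ s
        _ = Y.card := by simp
        _ = p := hYcard
      have h2 : (t y₀).card ≤ (s.biUnion t).card :=
        Finset.card_le_card (Finset.subset_biUnion_of_mem t hy₀)
      have := htcard y₀
      omega
  obtain ⟨f, hfinj, hft⟩ := (Finset.all_card_le_biUnion_card_iff_exists_injective t).mp hall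
  apply hnt
  apply hasTheta_of_pairs u v (Y.attach.image fun y => (f y, (y : Fin m)))
  · rw [Finset.card_image_of_injective]
    · simp [hYcard]
    · intro y z h
      exact Subtype.ext (congrArg Prod.snd h)
  · rintro s hs t' ht'
    simp only [Finset.mem_image, Finset.mem_attach, true_and] at hs ht'
    obtain ⟨ys, rfl⟩ := hs
    obtain ⟨yt, rfl⟩ := ht'
    intro hne
    have hys : ys ≠ yt := by rintro rfl; exact hne rfl
    constructor
    · exact fun h => hys (hfinj h)
    · exact fun h => hys (Subtype.ext h)
  · rintro s hs
    simp only [Finset.mem_image, Finset.mem_attach, true_and] at hs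
    obtain ⟨y, rfl⟩ := hs
    have hY := hYmem _ y.2
    have hf := hft y
    rw [ht] at hf
    simp only [Finset.mem_erase, Finset.mem_inter, mem_NA] at hf
    exact ⟨hf.1, hY.1, hf.2.1, hf.2.2, hY.2.1⟩

/-- Mirror image of `rich_bound`. -/
lemma rich_bound' {p : ℕ} (hp : 1 ≤ p) {F : Finset (Fin m × Fin n)}
    (hnt : ¬ HasTheta p F) (y : Fin m) (x : Fin n) :
    ((Finset.univ : Finset (Fin n)).filter fun v =>
      v ≠ x ∧ (y, v) ∈ F ∧ p + 1 ≤ (NB F x ∩ NB F v).card).card ≤ p - 1 := by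
  by_contra hcon
  have hge : p ≤ ((Finset.univ : Finset (Fin n)).filter fun v =>
      v ≠ x ∧ (y, v) ∈ F ∧ p + 1 ≤ (NB F x ∩ NB F v).card).card := by omega
  obtain ⟨Y, hYsub, hYcard⟩ := Finset.exists_subset_card_eq hge
  have hYmem : ∀ v ∈ Y, v ≠ x ∧ (y, v) ∈ F ∧ p + 1 ≤ (NB F x ∩ NB F v).card := by
    intro v hv
    have := hYsub hv
    simpa using this
  set t : {v // v ∈ Y} → Finset (Fin m) := fun v => (NB F x ∩ NB F (v : Fin n)).erase y with ht
  have htcard : ∀ v : {v // v ∈ Y}, p ≤ (t v).card := by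
    intro v
    have h1 := (hYmem _ v.2).2.2
    by_cases hy : y ∈ NB F x ∩ NB F (v : Fin n)
    · rw [ht]; simp only []; rw [Finset.card_erase_of_mem hy]; omega
    · rw [ht]; simp only []; rw [Finset.erase_eq_of_notMem hy]; omega
  have hall : ∀ s : Finset {v // v ∈ Y}, s.card ≤ (s.biUnion t).card := by
    intro s
    rcases s.eq_empty_or_nonempty with rfl | ⟨v₀, hv₀⟩
    · simp
    · have h1 : s.card ≤ p := by
        calc s.card ≤ (Finset.univ : Finset {v // v ∈ Y}).card := Finset.card_le_univ s
        _ = Y.card := by simp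
        _ = p := hYcard
      have h2 : (t v₀).card ≤ (s.biUnion t).card :=
        Finset.card_le_card (Finset.subset_biUnion_of_mem t hv₀)
      have := htcard v₀
      omega
  obtain ⟨f, hfinj, hft⟩ := (Finset.all_card_le_biUnion_card_iff_exists_injective t).mp hall
  apply hnt
  apply hasTheta_of_pairs y x (Y.attach.image fun v => (Subtype.val v, f v))
  · rw [Finset.card_image_of_injective]
    · simp [hYcard]
    · intro v w h
      exact Subtype.ext (congrArg Prod.fst h)
  · rintro s hs t' ht'
    simp only [Finset.mem_image, Finset.mem_attach, true_and] at hs ht'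
    obtain ⟨vs, rfl⟩ := hs
    obtain ⟨vt, rfl⟩ := ht'
    intro hne
    have hvs : vs ≠ vt := by rintro rfl; exact hne rfl
    constructor
    · exact fun h => hvs (Subtype.ext h)
    · exact fun h => hvs (hfinj h)
  · rintro s hs
    simp only [Finset.mem_image, Finset.mem_attach, true_and] at hs
    obtain ⟨v, rfl⟩ := hs
    have hY := hYmem _ v.2
    have hf := hft v
    rw [ht] at hf
    simp only [Finset.mem_erase, Finset.mem_inter, mem_NB] at hf
    exact ⟨hY.1, hf.1, hY.2.1, hf.2.2, hf.2.1⟩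


/-- Doubly-sparse paths of length 3 between a fixed pair have bounded count,
via a maximal matching argument. -/
lemma ds_bound {p : ℕ} (hp : 1 ≤ p) {F : Finset (Fin m × Fin n)}
    (hnt : ¬ HasTheta p F) (u : Fin m) (v : Fin n) :
    ((Finset.univ : Finset (Fin n × Fin m)).filter fun s =>
      (u, s.1) ∈ F ∧ (s.2, s.1) ∈ F ∧ (s.2, v) ∈ F ∧ s.1 ≠ v ∧ s.2 ≠ u ∧
      (NA F u ∩ NA F s.2).card ≤ p ∧ (NB F s.1 ∩ NB F v).card ≤ p).card ≤ 2 * p * (p - 1) := by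
  classical
  set DS : Finset (Fin n × Fin m) := (Finset.univ : Finset (Fin n × Fin m)).filter fun s =>
      (u, s.1) ∈ F ∧ (s.2, s.1) ∈ F ∧ (s.2, v) ∈ F ∧ s.1 ≠ v ∧ s.2 ≠ u ∧
      (NA F u ∩ NA F s.2).card ≤ p ∧ (NB F s.1 ∩ NB F v).card ≤ p with hDS
  set P : Finset (Finset (Fin n × Fin m)) := DS.powerset.filter fun M =>
      ∀ s ∈ M, ∀ t ∈ M, s ≠ t → s.1 ≠ t.1 ∧ s.2 ≠ t.2 with hP
  have hPne : P.Nonempty := ⟨∅, by simp [hP]⟩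
  obtain ⟨M, hMP, hMmax⟩ := P.exists_max_image (fun M => M.card) hPne
  have hMDS : M ⊆ DS := by
    have := (Finset.mem_filter.mp hMP).1
    exact Finset.mem_powerset.mp this
  have hMdisj : ∀ s ∈ M, ∀ t ∈ M, s ≠ t → s.1 ≠ t.1 ∧ s.2 ≠ t.2 :=
    (Finset.mem_filter.mp hMP).2
  -- the matching has size at most p - 1
  have hMcard : M.card ≤ p - 1 := by
    by_contra hcon
    have hge : p ≤ M.card := by omega
    obtain ⟨M', hM'sub, hM'card⟩ := Finset.exists_subset_card_eq hge
    apply hnt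
    apply hasTheta_of_pairs u v M' hM'card
    · intro s hs t ht
      exact hMdisj s (hM'sub hs) t (hM'sub ht)
    · intro s hs
      have := hMDS (hM'sub hs)
      rw [hDS, Finset.mem_filter] at this
      exact ⟨this.2.2.2.2.1, this.2.2.2.2.2.1, this.2.1, this.2.2.1, this.2.2.2.1⟩
  -- every doubly-sparse pair meets the matching
  have hcover : DS ⊆ M.biUnion fun s => DS.filter fun t => t.1 = s.1 ∨ t.2 = s.2 := by
    intro t ht
    rw [Finset.mem_biUnion]
    by_contra hnc
    push_neg at hnc
    have htM : t ∉ M := by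
      intro htM
      exact (hnc t htM) (Finset.mem_filter.mpr ⟨ht, Or.inl rfl⟩)
    have hins : insert t M ∈ P := by
      rw [hP, Finset.mem_filter, Finset.mem_powerset]
      constructor
      · intro s hs
        rcases Finset.mem_insert.mp hs with rfl | hs
        · exact ht
        · exact hMDS hs
      · have hcov : ∀ s ∈ M, t.1 ≠ s.1 ∧ t.2 ≠ s.2 := by
          intro s hsM
          have := hnc s hsM
          rw [Finset.mem_filter] at this
          push_neg at this
          exact this ht
        intro s hs s' hs' hss
        rcases Finset.mem_insert.mp hs with h1 | h1 <;>
          rcases Finset.mem_insert.mp hs' with h2 | h2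
        · exact absurd (h1.trans h2.symm) hss
        · rw [h1]; exact hcov s' h2
        · rw [h2]; exact ⟨(hcov s h1).1.symm, (hcov s h1).2.symm⟩
        · exact hMdisj s h1 s' h2 hss
    have := hMmax _ hins
    rw [Finset.card_insert_of_notMem htM] at this
    omega
  -- each matching element covers at most 2p doubly-sparse pairs
  have hfib : ∀ s ∈ M, (DS.filter fun t => t.1 = s.1 ∨ t.2 = s.2).card ≤ 2 * p := by
    intro s hs
    have hsDS := hMDS hs
    rw [hDS, Finset.mem_filter] at hsDS
    have hsp1 : (NA F u ∩ NA F s.2).card ≤ p := hsDS.2.2.2.2.2.2.1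
    have hsp2 : (NB F s.1 ∩ NB F v).card ≤ p := hsDS.2.2.2.2.2.2.2
    have hsub : (DS.filter fun t => t.1 = s.1 ∨ t.2 = s.2) ⊆
        (DS.filter fun t => t.1 = s.1) ∪ (DS.filter fun t => t.2 = s.2) := by
      intro t ht
      rw [Finset.mem_filter] at ht
      rcases ht.2 with h | h
      · exact Finset.mem_union_left _ (Finset.mem_filter.mpr ⟨ht.1, h⟩)
      · exact Finset.mem_union_right _ (Finset.mem_filter.mpr ⟨ht.1, h⟩)
    have h1 : (DS.filter fun t => t.1 = s.1).card ≤ p := by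
      calc (DS.filter fun t => t.1 = s.1).card ≤ (NB F s.1 ∩ NB F v).card := by
            apply Finset.card_le_card_of_injOn (fun t => t.2)
            · intro t ht
              rw [Finset.mem_coe, Finset.mem_filter, hDS, Finset.mem_filter] at ht
              obtain ⟨⟨_, _, h2, h3, _⟩, h4⟩ := ht
              rw [Finset.mem_coe, Finset.mem_inter, mem_NB, mem_NB]
              exact ⟨h4 ▸ h2, h3⟩
            · intro t ht t' ht' htt
              simp only [Finset.coe_filter, Set.mem_setOf_eq] at ht ht'
              exact Prod.ext (ht.2.trans ht'.2.symm) htt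
        _ ≤ p := hsp2
    have h2 : (DS.filter fun t => t.2 = s.2).card ≤ p := by
      calc (DS.filter fun t => t.2 = s.2).card ≤ (NA F u ∩ NA F s.2).card := by
            apply Finset.card_le_card_of_injOn (fun t => t.1)
            · intro t ht
              rw [Finset.mem_coe, Finset.mem_filter, hDS, Finset.mem_filter] at ht
              obtain ⟨⟨_, h1, h2, _⟩, h4⟩ := ht
              rw [Finset.mem_coe, Finset.mem_inter, mem_NA, mem_NA]
              exact ⟨h1, h4 ▸ h2⟩
            · intro t ht t' ht' htt
              simp only [Finset.coe_filter, Set.mem_setOf_eq] at ht ht'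
              exact Prod.ext htt (ht.2.trans ht'.2.symm)
        _ ≤ p := hsp1
    calc (DS.filter fun t => t.1 = s.1 ∨ t.2 = s.2).card
        ≤ ((DS.filter fun t => t.1 = s.1) ∪ (DS.filter fun t => t.2 = s.2)).card :=
          Finset.card_le_card hsub
      _ ≤ (DS.filter fun t => t.1 = s.1).card + (DS.filter fun t => t.2 = s.2).card :=
          Finset.card_union_le _ _
      _ ≤ 2 * p := by omega
  calc DS.card ≤ (M.biUnion fun s => DS.filter fun t => t.1 = s.1 ∨ t.2 = s.2).card :=
        Finset.card_le_card hcover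
    _ ≤ ∑ s ∈ M, (DS.filter fun t => t.1 = s.1 ∨ t.2 = s.2).card := Finset.card_biUnion_le
    _ ≤ ∑ s ∈ M, 2 * p := Finset.sum_le_sum hfib
    _ = M.card * (2 * p) := by rw [Finset.sum_const, smul_eq_mul]
    _ ≤ (p - 1) * (2 * p) := by
        apply Nat.mul_le_mul_right
        exact hMcard
    _ = 2 * p * (p - 1) := by ring

/-- The cleaning lemma: pass to a subgraph with all degrees large. -/
lemma clean (a b : ℕ) (E : Finset (Fin m × Fin n)) :
    ∃ F ⊆ E, (∀ t ∈ F, a + 1 ≤ (NA F t.1).card ∧ b + 1 ≤ (NB F t.2).card) ∧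
      E.card + a * (F.image Prod.fst).card + b * (F.image Prod.snd).card ≤
        F.card + a * (E.image Prod.fst).card + b * (E.image Prod.snd).card := by
  classical
  induction E using Finset.strongInductionOn with
  | _ E ih =>
    by_cases hA : ∃ t ∈ E, (NA E t.1).card ≤ a
    · obtain ⟨t₀, ht₀, hdeg⟩ := hA
      set E₁ := E.filter fun t => ¬ (t.1 = t₀.1) with hE₁
      have hssub : E₁ ⊂ E := Finset.filter_ssubset.mpr ⟨t₀, ht₀, by simp⟩
      obtain ⟨F, hFsub, hgood, hcount⟩ := ih E₁ hssub
      refine ⟨F, hFsub.trans (Finset.filter_subset _ _), hgood, ?_⟩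
      have hcard1 : (E.filter fun t => t.1 = t₀.1).card = (NA E t₀.1).card := by
        apply Finset.card_nbij' (fun t => t.2) (fun x => (t₀.1, x))
        · intro t ht
          rw [Finset.mem_coe, Finset.mem_filter] at ht
          rw [Finset.mem_coe, mem_NA]
          rw [← ht.2]
          exact ht.1
        · intro x hx
          rw [Finset.mem_coe, mem_NA] at hx
          rw [Finset.mem_coe, Finset.mem_filter]
          exact ⟨hx, rfl⟩
        · intro t ht
          rw [Finset.mem_coe, Finset.mem_filter] at ht
          rw [← ht.2]
        · intro x hx
          rfl
      have hsplit : (E.filter fun t => t.1 = t₀.1).card + E₁.card = E.card := by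
        rw [hE₁]
        exact Finset.card_filter_add_card_filter_not _
      have himgA : (E₁.image Prod.fst).card + 1 ≤ (E.image Prod.fst).card := by
        have hsub2 : E₁.image Prod.fst ⊆ (E.image Prod.fst).erase t₀.1 := by
          intro z hz
          rw [Finset.mem_image] at hz
          obtain ⟨t, ht, rfl⟩ := hz
          rw [Finset.mem_filter] at ht
          rw [Finset.mem_erase]
          exact ⟨ht.2, Finset.mem_image_of_mem _ ht.1⟩
        have h2 := Finset.card_le_card hsub2
        have h3 : t₀.1 ∈ E.image Prod.fst := Finset.mem_image_of_mem _ ht₀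
        rw [Finset.card_erase_of_mem h3] at h2
        have h4 : 1 ≤ (E.image Prod.fst).card := Finset.card_pos.mpr ⟨t₀.1, h3⟩
        omega
      have himgB : (E₁.image Prod.snd).card ≤ (E.image Prod.snd).card :=
        Finset.card_le_card (Finset.image_subset_image (Finset.filter_subset _ _))
      -- assemble
      have key : E.card ≤ E₁.card + a := by omega
      calc E.card + a * (F.image Prod.fst).card + b * (F.image Prod.snd).card
          ≤ (E₁.card + a) + a * (F.image Prod.fst).card + b * (F.image Prod.snd).card := by
            omega
        _ = (E₁.card + a * (F.image Prod.fst).card + b * (F.image Prod.snd).card) + a := by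
            ring
        _ ≤ (F.card + a * (E₁.image Prod.fst).card + b * (E₁.image Prod.snd).card) + a := by
            omega
        _ = F.card + a * ((E₁.image Prod.fst).card + 1) + b * (E₁.image Prod.snd).card := by
            ring
        _ ≤ F.card + a * (E.image Prod.fst).card + b * (E.image Prod.snd).card := by
            have := Nat.mul_le_mul_left a himgA
            have := Nat.mul_le_mul_left b himgB
            omega
    · by_cases hB : ∃ t ∈ E, (NB E t.2).card ≤ b
      · obtain ⟨t₀, ht₀, hdeg⟩ := hB
        set E₁ := E.filter fun t => ¬ (t.2 = t₀.2) with hE₁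
        have hssub : E₁ ⊂ E := Finset.filter_ssubset.mpr ⟨t₀, ht₀, by simp⟩
        obtain ⟨F, hFsub, hgood, hcount⟩ := ih E₁ hssub
        refine ⟨F, hFsub.trans (Finset.filter_subset _ _), hgood, ?_⟩
        have hcard1 : (E.filter fun t => t.2 = t₀.2).card = (NB E t₀.2).card := by
          apply Finset.card_nbij' (fun t => t.1) (fun y => (y, t₀.2))
          · intro t ht
            rw [Finset.mem_coe, Finset.mem_filter] at ht
            rw [Finset.mem_coe, mem_NB]
            rw [← ht.2]
            exact ht.1
          · intro y hy
            rw [Finset.mem_coe, mem_NB] at hy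
            rw [Finset.mem_coe, Finset.mem_filter]
            exact ⟨hy, rfl⟩
          · intro t ht
            rw [Finset.mem_coe, Finset.mem_filter] at ht
            rw [← ht.2]
          · intro y hy
            rfl
        have hsplit : (E.filter fun t => t.2 = t₀.2).card + E₁.card = E.card := by
          rw [hE₁]
          exact Finset.card_filter_add_card_filter_not _
        have himgB : (E₁.image Prod.snd).card + 1 ≤ (E.image Prod.snd).card := by
          have hsub2 : E₁.image Prod.snd ⊆ (E.image Prod.snd).erase t₀.2 := by
            intro z hz
            rw [Finset.mem_image] at hz
            obtain ⟨t, ht, rfl⟩ := hz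
            rw [Finset.mem_filter] at ht
            rw [Finset.mem_erase]
            exact ⟨ht.2, Finset.mem_image_of_mem _ ht.1⟩
          have h2 := Finset.card_le_card hsub2
          have h3 : t₀.2 ∈ E.image Prod.snd := Finset.mem_image_of_mem _ ht₀
          rw [Finset.card_erase_of_mem h3] at h2
          have h4 : 1 ≤ (E.image Prod.snd).card := Finset.card_pos.mpr ⟨t₀.2, h3⟩
          omega
        have himgA : (E₁.image Prod.fst).card ≤ (E.image Prod.fst).card :=
          Finset.card_le_card (Finset.image_subset_image (Finset.filter_subset _ _))
        have key : E.card ≤ E₁.card + b := by omega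
        calc E.card + a * (F.image Prod.fst).card + b * (F.image Prod.snd).card
            ≤ (E₁.card + b) + a * (F.image Prod.fst).card + b * (F.image Prod.snd).card := by
              omega
          _ = (E₁.card + a * (F.image Prod.fst).card + b * (F.image Prod.snd).card) + b := by
              ring
          _ ≤ (F.card + a * (E₁.image Prod.fst).card + b * (E₁.image Prod.snd).card) + b := by
              omega
          _ = F.card + a * (E₁.image Prod.fst).card + b * ((E₁.image Prod.snd).card + 1) := by
              ring
          _ ≤ F.card + a * (E.image Prod.fst).card + b * (E.image Prod.snd).card := by
              have := Nat.mul_le_mul_left a himgA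
              have := Nat.mul_le_mul_left b himgB
              omega
      · push_neg at hA hB
        refine ⟨E, Finset.Subset.refl E, ?_, le_refl _⟩
        intro t ht
        have h1 := hA t ht
        have h2 := hB t ht
        omega


lemma inter_card_comm {γ : Type*} [DecidableEq γ] (s t : Finset γ) :
    (s ∩ t).card = (t ∩ s).card := by rw [Finset.inter_comm]

/-- The master counting inequality in the cleaned graph. -/
lemma count_master {p : ℕ} (hp : 1 ≤ p) {F : Finset (Fin m × Fin n)} (hnt : ¬ HasTheta p F)
    {a b : ℕ}
    (hgood : ∀ t ∈ F, a + 1 ≤ (NA F t.1).card ∧ b + 1 ≤ (NB F t.2).card)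
    (ha : 4 * (p - 1) ≤ a) (hb : 4 * (p - 1) ≤ b) :
    F.card * (b * a) ≤ 4 * p * p * (m * n) := by
  classical
  set eA : Fin m × Fin n → ℕ := fun t => ((NA F t.1).erase t.2).card with heAdef
  set eB : Fin m × Fin n → ℕ := fun t => ((NB F t.2).erase t.1).card with heBdef
  have heA : ∀ t ∈ F, a ≤ eA t := by
    intro t ht
    have h1 := (hgood t ht).1
    have h2 : t.2 ∈ NA F t.1 := by rw [mem_NA]; rwa [Prod.mk.eta]
    rw [heAdef]; simp only []
    rw [Finset.card_erase_of_mem h2]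
    omega
  have heB : ∀ t ∈ F, b ≤ eB t := by
    intro t ht
    have h1 := (hgood t ht).2
    have h2 : t.1 ∈ NB F t.2 := by rw [mem_NB]; rwa [Prod.mk.eta]
    rw [heBdef]; simp only []
    rw [Finset.card_erase_of_mem h2]
    omega
  set T : Finset (Fin m × Fin n × Fin m × Fin n) :=
    Finset.univ.filter fun q =>
      (q.1, q.2.1) ∈ F ∧ (q.2.2.1, q.2.1) ∈ F ∧ (q.2.2.1, q.2.2.2) ∈ F ∧
      q.2.2.1 ≠ q.1 ∧ q.2.2.2 ≠ q.2.1 with hTdef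
  -- (1) fiberwise count of T over its middle edge
  have hT1 : T.card = ∑ t ∈ F, eB t * eA t := by
    have h0 : ∀ q ∈ T, (q.2.2.1, q.2.1) ∈ F := by
      intro q hq
      rw [hTdef, Finset.mem_filter] at hq
      exact hq.2.2.1
    rw [Finset.card_eq_sum_card_fiberwise h0]
    apply Finset.sum_congr rfl
    rintro ⟨t1, t2⟩ ht
    rw [← Finset.card_product]
    apply Finset.card_nbij' (fun q => (q.1, q.2.2.2)) (fun r => (r.1, t2, t1, r.2))
    · rintro ⟨u, x, y, v⟩ hq
      simp only [Finset.mem_coe, hTdef, Finset.mem_filter, Finset.mem_univ, true_and, Prod.mk.injEq] at hq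
      obtain ⟨⟨h1, h2, h3, h4, h5⟩, hy, hx⟩ := hq
      simp only [Finset.mem_coe, Finset.mem_product, Finset.mem_erase, mem_NB, mem_NA, heAdef, heBdef]
      subst hy hx
      exact ⟨⟨fun h => h4 h.symm, h1⟩, ⟨h5, h3⟩⟩
    · rintro ⟨w, z⟩ hr
      simp only [Finset.mem_coe, Finset.mem_product, Finset.mem_erase, mem_NB, mem_NA, heAdef, heBdef] at hr
      obtain ⟨⟨hw1, hw2⟩, hz1, hz2⟩ := hr
      simp only [Finset.mem_coe, hTdef, Finset.mem_filter, Finset.mem_univ, true_and, Prod.mk.injEq]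
      exact ⟨⟨hw2, ht, hz2, fun h => hw1 h.symm, hz1⟩, trivial⟩
    · rintro ⟨u, x, y, v⟩ hq
      simp only [Finset.mem_coe, hTdef, Finset.mem_filter, Finset.mem_univ, true_and, Prod.mk.injEq] at hq
      obtain ⟨-, hy, hx⟩ := hq
      subst hy hx
      rfl
    · rintro ⟨w, z⟩ _
      rfl
  -- splitting into doubly-sparse and rich parts
  set Tds : Finset (Fin m × Fin n × Fin m × Fin n) := T.filter fun q =>
    (NA F q.1 ∩ NA F q.2.2.1).card ≤ p ∧ (NB F q.2.1 ∩ NB F q.2.2.2).card ≤ p with hTdsdef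
  set TrA : Finset (Fin m × Fin n × Fin m × Fin n) := T.filter fun q =>
    p + 1 ≤ (NA F q.1 ∩ NA F q.2.2.1).card with hTrAdef
  set TrB : Finset (Fin m × Fin n × Fin m × Fin n) := T.filter fun q =>
    p + 1 ≤ (NB F q.2.1 ∩ NB F q.2.2.2).card with hTrBdef
  have hsplit : T.card ≤ Tds.card + TrA.card + TrB.card := by
    have hsub : T ⊆ Tds ∪ TrA ∪ TrB := by
      intro q hq
      by_cases c1 : p + 1 ≤ (NA F q.1 ∩ NA F q.2.2.1).card
      · exact Finset.mem_union_left _ (Finset.mem_union_right _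
          (Finset.mem_filter.mpr ⟨hq, c1⟩))
      · by_cases c2 : p + 1 ≤ (NB F q.2.1 ∩ NB F q.2.2.2).card
        · exact Finset.mem_union_right _ (Finset.mem_filter.mpr ⟨hq, c2⟩)
        · exact Finset.mem_union_left _ (Finset.mem_union_left _
            (Finset.mem_filter.mpr ⟨hq, by omega, by omega⟩))
    calc T.card ≤ (Tds ∪ TrA ∪ TrB).card := Finset.card_le_card hsub
      _ ≤ (Tds ∪ TrA).card + TrB.card := Finset.card_union_le _ _
      _ ≤ Tds.card + TrA.card + TrB.card := by
          have := Finset.card_union_le Tds TrA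
          omega
  -- (4) doubly-sparse bound
  have hds : Tds.card ≤ (m * n) * (2 * p * (p - 1)) := by
    have h0 : ∀ q ∈ Tds, (q.1, q.2.2.2) ∈ (Finset.univ : Finset (Fin m × Fin n)) :=
      fun _ _ => Finset.mem_univ _
    rw [Finset.card_eq_sum_card_fiberwise h0]
    calc ∑ w ∈ (Finset.univ : Finset (Fin m × Fin n)),
          (Tds.filter fun q => (q.1, q.2.2.2) = w).card
        ≤ ∑ _w ∈ (Finset.univ : Finset (Fin m × Fin n)), 2 * p * (p - 1) := by
          apply Finset.sum_le_sum
          rintro ⟨w1, w2⟩ _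
          calc (Tds.filter fun q => (q.1, q.2.2.2) = (w1, w2)).card
              ≤ ((Finset.univ : Finset (Fin n × Fin m)).filter fun s =>
                  (w1, s.1) ∈ F ∧ (s.2, s.1) ∈ F ∧ (s.2, w2) ∈ F ∧ s.1 ≠ w2 ∧ s.2 ≠ w1 ∧
                  (NA F w1 ∩ NA F s.2).card ≤ p ∧ (NB F s.1 ∩ NB F w2).card ≤ p).card := by
                apply Finset.card_le_card_of_injOn (fun q => (q.2.1, q.2.2.1))
                · rintro ⟨u, x, y, v⟩ hq
                  simp only [Finset.mem_coe, hTdsdef, hTdef, Finset.mem_filter, Finset.mem_univ, true_and,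
                    Prod.mk.injEq] at hq
                  obtain ⟨⟨⟨h1, h2, h3, h4, h5⟩, hs1, hs2⟩, hu, hv⟩ := hq
                  subst hu hv
                  simp only [Finset.mem_coe, Finset.mem_filter, Finset.mem_univ, true_and]
                  exact ⟨h1, h2, h3, fun h => h5 h.symm, h4, hs1, hs2⟩
                · rintro ⟨u, x, y, v⟩ hq ⟨u', x', y', v'⟩ hq' heq
                  simp only [Finset.coe_filter, Set.mem_setOf_eq, Prod.mk.injEq] at hq hq'
                  simp only [Prod.mk.injEq] at heq
                  obtain ⟨-, hu, hv⟩ := hq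
                  obtain ⟨-, hu', hv'⟩ := hq'
                  simp only [Prod.mk.injEq]
                  exact ⟨hu.trans hu'.symm, heq.1, heq.2, hv.trans hv'.symm⟩
            _ ≤ 2 * p * (p - 1) := ds_bound hp hnt w1 w2
      _ = (m * n) * (2 * p * (p - 1)) := by
          rw [Finset.sum_const, smul_eq_mul, Finset.card_univ]
          simp
  -- (5) rich-A bound
  have hSAcount : TrA.card ≤ (p - 1) * ∑ t ∈ F, eA t := by
    set W : Finset (Fin m × Fin n × Fin n) := Finset.univ.filter fun w =>
      (w.1, w.2.1) ∈ F ∧ (w.1, w.2.2) ∈ F ∧ w.2.2 ≠ w.2.1 with hWdef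
    have h0 : ∀ q ∈ TrA, (q.2.2.1, q.2.1, q.2.2.2) ∈ W := by
      rintro ⟨u, x, y, v⟩ hq
      simp only [hTrAdef, hTdef, Finset.mem_filter, Finset.mem_univ, true_and] at hq
      obtain ⟨⟨h1, h2, h3, h4, h5⟩, -⟩ := hq
      simp only [hWdef, Finset.mem_filter, Finset.mem_univ, true_and]
      exact ⟨h2, h3, h5⟩
    rw [Finset.card_eq_sum_card_fiberwise h0]
    have hWcard : W.card = ∑ t ∈ F, eA t := by
      have h1 : ∀ w ∈ W, (w.1, w.2.1) ∈ F := by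
        intro w hw
        rw [hWdef, Finset.mem_filter] at hw
        exact hw.2.1
      rw [Finset.card_eq_sum_card_fiberwise h1]
      apply Finset.sum_congr rfl
      rintro ⟨t1, t2⟩ ht
      apply Finset.card_nbij' (fun w => w.2.2) (fun z => (t1, t2, z))
      · rintro ⟨y, x, v⟩ hw
        simp only [Finset.mem_coe, hWdef, Finset.mem_filter, Finset.mem_univ, true_and, Prod.mk.injEq] at hw
        obtain ⟨⟨h1', h2', h3'⟩, hy, hx⟩ := hw
        subst hy hx
        simp only [Finset.mem_coe, heAdef, Finset.mem_erase, mem_NA]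
        exact ⟨h3', h2'⟩
      · intro z hz
        simp only [Finset.mem_coe, heAdef, Finset.mem_erase, mem_NA] at hz
        simp only [Finset.mem_coe, hWdef, Finset.mem_filter, Finset.mem_univ, true_and, Prod.mk.injEq]
        exact ⟨⟨ht, hz.2, hz.1⟩, trivial⟩
      · rintro ⟨y, x, v⟩ hw
        simp only [Finset.mem_coe, hWdef, Finset.mem_filter, Finset.mem_univ, true_and, Prod.mk.injEq] at hw
        obtain ⟨-, hy, hx⟩ := hw
        subst hy hx
        rfl
      · intro z _
        rfl
    calc ∑ w ∈ W, (TrA.filter fun q => (q.2.2.1, q.2.1, q.2.2.2) = w).card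
        ≤ ∑ _w ∈ W, (p - 1) := by
          apply Finset.sum_le_sum
          rintro ⟨w1, w2, w3⟩ _
          calc (TrA.filter fun q => (q.2.2.1, q.2.1, q.2.2.2) = (w1, w2, w3)).card
              ≤ ((Finset.univ : Finset (Fin m)).filter fun z =>
                  z ≠ w1 ∧ (z, w2) ∈ F ∧ p + 1 ≤ (NA F w1 ∩ NA F z).card).card := by
                apply Finset.card_le_card_of_injOn (fun q => q.1)
                · rintro ⟨u, x, y, v⟩ hq
                  simp only [Finset.mem_coe, hTrAdef, hTdef, Finset.mem_filter, Finset.mem_univ, true_and,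
                    Prod.mk.injEq] at hq
                  obtain ⟨⟨⟨h1, h2, h3, h4, h5⟩, hrich⟩, hy, hx, hv⟩ := hq
                  subst hy hx hv
                  simp only [Finset.mem_coe, Finset.mem_filter, Finset.mem_univ, true_and]
                  refine ⟨fun h => h4 h.symm, h1, ?_⟩
                  rwa [inter_card_comm]
                · rintro ⟨u, x, y, v⟩ hq ⟨u', x', y', v'⟩ hq' heq
                  simp only [Finset.coe_filter, Set.mem_setOf_eq, Prod.mk.injEq] at hq hq'
                  obtain ⟨-, hy, hx, hv⟩ := hq
                  obtain ⟨-, hy', hx', hv'⟩ := hq'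
                  simp only at heq
                  simp only [Prod.mk.injEq]
                  exact ⟨heq, hx.trans hx'.symm, hy.trans hy'.symm, hv.trans hv'.symm⟩
            _ ≤ p - 1 := rich_bound hp hnt w1 w2
      _ = W.card * (p - 1) := by rw [Finset.sum_const, smul_eq_mul]
      _ = (p - 1) * ∑ t ∈ F, eA t := by rw [hWcard, Nat.mul_comm]
  -- (6) rich-B bound
  have hSBcount : TrB.card ≤ (p - 1) * ∑ t ∈ F, eB t := by
    set W : Finset (Fin m × Fin n × Fin m) := Finset.univ.filter fun w =>
      (w.1, w.2.1) ∈ F ∧ (w.2.2, w.2.1) ∈ F ∧ w.2.2 ≠ w.1 with hWdef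
    have h0 : ∀ q ∈ TrB, (q.1, q.2.1, q.2.2.1) ∈ W := by
      rintro ⟨u, x, y, v⟩ hq
      simp only [hTrBdef, hTdef, Finset.mem_filter, Finset.mem_univ, true_and] at hq
      obtain ⟨⟨h1, h2, h3, h4, h5⟩, -⟩ := hq
      simp only [hWdef, Finset.mem_filter, Finset.mem_univ, true_and]
      exact ⟨h1, h2, h4⟩
    rw [Finset.card_eq_sum_card_fiberwise h0]
    have hWcard : W.card = ∑ t ∈ F, eB t := by
      have h1 : ∀ w ∈ W, (w.2.2, w.2.1) ∈ F := by
        intro w hw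
        rw [hWdef, Finset.mem_filter] at hw
        exact hw.2.2.1
      rw [Finset.card_eq_sum_card_fiberwise h1]
      apply Finset.sum_congr rfl
      rintro ⟨t1, t2⟩ ht
      apply Finset.card_nbij' (fun w => w.1) (fun z => (z, t2, t1))
      · rintro ⟨u, x, y⟩ hw
        simp only [Finset.mem_coe, hWdef, Finset.mem_filter, Finset.mem_univ, true_and, Prod.mk.injEq] at hw
        obtain ⟨⟨h1', h2', h3'⟩, hy, hx⟩ := hw
        subst hy hx
        simp only [Finset.mem_coe, heBdef, Finset.mem_erase, mem_NB]
        exact ⟨fun h => h3' h.symm, h1'⟩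
      · intro z hz
        simp only [Finset.mem_coe, heBdef, Finset.mem_erase, mem_NB] at hz
        simp only [Finset.mem_coe, hWdef, Finset.mem_filter, Finset.mem_univ, true_and, Prod.mk.injEq]
        exact ⟨⟨hz.2, ht, fun h => hz.1 h.symm⟩, trivial⟩
      · rintro ⟨u, x, y⟩ hw
        simp only [Finset.mem_coe, hWdef, Finset.mem_filter, Finset.mem_univ, true_and, Prod.mk.injEq] at hw
        obtain ⟨-, hy, hx⟩ := hw
        subst hy hx
        rfl
      · intro z _
        rfl
    calc ∑ w ∈ W, (TrB.filter fun q => (q.1, q.2.1, q.2.2.1) = w).card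
        ≤ ∑ _w ∈ W, (p - 1) := by
          apply Finset.sum_le_sum
          rintro ⟨w1, w2, w3⟩ _
          calc (TrB.filter fun q => (q.1, q.2.1, q.2.2.1) = (w1, w2, w3)).card
              ≤ ((Finset.univ : Finset (Fin n)).filter fun z =>
                  z ≠ w2 ∧ (w3, z) ∈ F ∧ p + 1 ≤ (NB F w2 ∩ NB F z).card).card := by
                apply Finset.card_le_card_of_injOn (fun q => q.2.2.2)
                · rintro ⟨u, x, y, v⟩ hq
                  simp only [Finset.mem_coe, hTrBdef, hTdef, Finset.mem_filter, Finset.mem_univ, true_and,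
                    Prod.mk.injEq] at hq
                  obtain ⟨⟨⟨h1, h2, h3, h4, h5⟩, hrich⟩, hu, hx, hy⟩ := hq
                  subst hu hx hy
                  simp only [Finset.mem_coe, Finset.mem_filter, Finset.mem_univ, true_and]
                  exact ⟨h5, h3, hrich⟩
                · rintro ⟨u, x, y, v⟩ hq ⟨u', x', y', v'⟩ hq' heq
                  simp only [Finset.coe_filter, Set.mem_setOf_eq, Prod.mk.injEq] at hq hq'
                  obtain ⟨-, hu, hx, hy⟩ := hq
                  obtain ⟨-, hu', hx', hy'⟩ := hq'
                  simp only at heq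
                  simp only [Prod.mk.injEq]
                  exact ⟨hu.trans hu'.symm, hx.trans hx'.symm, hy.trans hy'.symm, heq⟩
            _ ≤ p - 1 := rich_bound' hp hnt w3 w2
      _ = W.card * (p - 1) := by rw [Finset.sum_const, smul_eq_mul]
      _ = (p - 1) * ∑ t ∈ F, eB t := by rw [hWcard, Nat.mul_comm]
  -- (7) pointwise absorption
  have hSA : 4 * (p - 1) * (∑ t ∈ F, eA t) ≤ T.card := by
    rw [hT1, Finset.mul_sum]
    apply Finset.sum_le_sum
    intro t ht
    have h1 : 4 * (p - 1) ≤ eB t := le_trans hb (heB t ht)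
    exact Nat.mul_le_mul_right _ h1
  have hSB : 4 * (p - 1) * (∑ t ∈ F, eB t) ≤ T.card := by
    rw [hT1, Finset.mul_sum]
    apply Finset.sum_le_sum
    intro t ht
    have h1 : 4 * (p - 1) ≤ eA t := le_trans ha (heA t ht)
    calc 4 * (p - 1) * eB t ≤ eA t * eB t := Nat.mul_le_mul_right _ h1
      _ = eB t * eA t := Nat.mul_comm _ _
  -- (2) lower bound
  have hlow : F.card * (b * a) ≤ T.card := by
    rw [hT1]
    calc F.card * (b * a) = ∑ _t ∈ F, b * a := by rw [Finset.sum_const, smul_eq_mul]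
      _ ≤ ∑ t ∈ F, eB t * eA t :=
        Finset.sum_le_sum fun t ht => Nat.mul_le_mul (heB t ht) (heA t ht)
  -- (8) conclusion
  have h4A : 4 * TrA.card ≤ T.card := by
    calc 4 * TrA.card ≤ 4 * ((p - 1) * ∑ t ∈ F, eA t) := Nat.mul_le_mul_left 4 hSAcount
      _ = 4 * (p - 1) * ∑ t ∈ F, eA t := by rw [Nat.mul_assoc]
      _ ≤ T.card := hSA
  have h4B : 4 * TrB.card ≤ T.card := by
    calc 4 * TrB.card ≤ 4 * ((p - 1) * ∑ t ∈ F, eB t) := Nat.mul_le_mul_left 4 hSBcount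
      _ = 4 * (p - 1) * ∑ t ∈ F, eB t := by rw [Nat.mul_assoc]
      _ ≤ T.card := hSB
  have hhalf : T.card ≤ 2 * Tds.card := by omega
  calc F.card * (b * a) ≤ T.card := hlow
    _ ≤ 2 * Tds.card := hhalf
    _ ≤ 2 * ((m * n) * (2 * p * (p - 1))) := Nat.mul_le_mul_left 2 hds
    _ = (2 * (2 * p * (p - 1))) * (m * n) := by ring
    _ ≤ (4 * p * p) * (m * n) := by
        apply Nat.mul_le_mul_right
        have h1 : p - 1 ≤ p := Nat.sub_le p 1
        calc 2 * (2 * p * (p - 1)) = 4 * p * (p - 1) := by ring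
          _ ≤ 4 * p * p := Nat.mul_le_mul_left _ h1
    _ = 4 * p * p * (m * n) := by ring


/-- The core combinatorial bound. -/
lemma core {p : ℕ} (hp : 2 ≤ p) {E : Finset (Fin m × Fin n)} (hnt : ¬ HasTheta p E) :
    (E.card : ℝ) ≤ 144 * (p : ℝ) ^ 3 * (((m : ℝ) * n) ^ ((2 : ℝ) / 3) + m + n) := by
  classical
  have hmn0 : (0:ℝ) ≤ (m : ℝ) * n := by positivity
  have hX0 : (0:ℝ) ≤ ((m : ℝ) * n) ^ ((2 : ℝ) / 3) := Real.rpow_nonneg hmn0 _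
  have hp0 : (0:ℝ) ≤ (p:ℝ) ^ 3 := by positivity
  by_cases hsmall : E.card ≤ 144 * p ^ 3 * (m + n)
  · have h1 : (E.card : ℝ) ≤ ((144 * p ^ 3 * (m + n) : ℕ) : ℝ) := Nat.cast_le.mpr hsmall
    push_cast at h1
    nlinarith [hX0, hp0]
  · push_neg at hsmall
    set e := E.card with he
    have hm0 : 0 < m := by
      by_contra h
      have hm : m = 0 := by omega
      subst hm
      have h1 : e ≤ 0 := by
        have := Finset.card_le_univ E
        simpa [he] using this
      omega
    have hn0 : 0 < n := by
      by_contra h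
      have hn : n = 0 := by omega
      subst hn
      have h1 : e ≤ 0 := by
        have := Finset.card_le_univ E
        simpa [he] using this
      omega
    have hp1 : 1 ≤ p := by omega
    have hppow : p ≤ p ^ 3 := Nat.le_self_pow (by norm_num) p
    have hp3m : 144 * p ^ 3 * m ≤ e := by
      have h1 : 144 * p ^ 3 * m ≤ 144 * p ^ 3 * (m + n) :=
        Nat.mul_le_mul_left _ (Nat.le_add_right m n)
      omega
    have hp3n : 144 * p ^ 3 * n ≤ e := by
      have h1 : 144 * p ^ 3 * n ≤ 144 * p ^ 3 * (m + n) :=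
        Nat.mul_le_mul_left _ (Nat.le_add_left n m)
      omega
    set a := e / (4 * m) with hadef
    set b := e / (4 * n) with hbdef
    have ha36 : 36 * p ^ 3 ≤ a := by
      rw [hadef, Nat.le_div_iff_mul_le (by omega : 0 < 4 * m)]
      calc 36 * p ^ 3 * (4 * m) = 144 * p ^ 3 * m := by ring
        _ ≤ e := hp3m
    have hb36 : 36 * p ^ 3 ≤ b := by
      rw [hbdef, Nat.le_div_iff_mul_le (by omega : 0 < 4 * n)]
      calc 36 * p ^ 3 * (4 * n) = 144 * p ^ 3 * n := by ring
        _ ≤ e := hp3n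
    have ha4 : 4 * (p - 1) ≤ a := by omega
    have hb4 : 4 * (p - 1) ≤ b := by omega
    obtain ⟨F, hFE, hgood, hcount⟩ := clean a b E
    have hnt' : ¬ HasTheta p F := fun h => hnt (hasTheta_mono hFE h)
    have hkey := count_master hp1 hnt' hgood ha4 hb4
    have himgA : (E.image Prod.fst).card ≤ m := by
      calc (E.image Prod.fst).card ≤ (Finset.univ : Finset (Fin m)).card :=
            Finset.card_le_univ _
        _ = m := by simp
    have himgB : (E.image Prod.snd).card ≤ n := by
      calc (E.image Prod.snd).card ≤ (Finset.univ : Finset (Fin n)).card :=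
            Finset.card_le_univ _
        _ = n := by simp
    have hEF : e ≤ F.card + a * m + b * n := by
      have h2 : a * (E.image Prod.fst).card ≤ a * m := Nat.mul_le_mul_left a himgA
      have h3 : b * (E.image Prod.snd).card ≤ b * n := Nat.mul_le_mul_left b himgB
      omega
    have ham : a * m ≤ e / 4 := by
      rw [hadef, ← Nat.div_div_eq_div_mul]
      exact Nat.div_mul_le_self _ _
    have hbn : b * n ≤ e / 4 := by
      rw [hbdef, ← Nat.div_div_eq_div_mul]
      exact Nat.div_mul_le_self _ _
    have h2F : e ≤ 2 * F.card := by omega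
    have hea : e ≤ 8 * m * a := by
      have h1 : 4 * m * (e / (4 * m)) + e % (4 * m) = e := Nat.div_add_mod e (4 * m)
      rw [← hadef] at h1
      have h2 : e % (4 * m) < 4 * m := Nat.mod_lt e (by omega)
      have h3 : 1 ≤ a := by omega
      have h4 : 4 * m * 1 ≤ 4 * m * a := Nat.mul_le_mul_left _ h3
      linarith
    have heb : e ≤ 8 * n * b := by
      have h1 : 4 * n * (e / (4 * n)) + e % (4 * n) = e := Nat.div_add_mod e (4 * n)
      rw [← hbdef] at h1
      have h2 : e % (4 * n) < 4 * n := Nat.mod_lt e (by omega)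
      have h3 : 1 ≤ b := by omega
      have h4 : 4 * n * 1 ≤ 4 * n * b := Nat.mul_le_mul_left _ h3
      linarith
    -- cast everything to the reals
    have c1 : (e : ℝ) ≤ 2 * (F.card : ℝ) := by exact_mod_cast h2F
    have c2 : (e : ℝ) ≤ 8 * (m : ℝ) * a := by exact_mod_cast hea
    have c3 : (e : ℝ) ≤ 8 * (n : ℝ) * b := by exact_mod_cast heb
    have c4 : (F.card : ℝ) * ((b : ℝ) * a) ≤ 4 * (p : ℝ) * p * ((m : ℝ) * n) := by
      exact_mod_cast hkey
    have h0e : (0 : ℝ) ≤ (e : ℝ) := Nat.cast_nonneg _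
    have he3 : (e : ℝ) ^ 3 ≤ 512 * (p : ℝ) ^ 2 * ((m : ℝ) * n) ^ 2 := by
      calc (e : ℝ) ^ 3 = e * e * e := by ring
        _ ≤ 2 * (F.card : ℝ) * (8 * (m : ℝ) * a) * (8 * (n : ℝ) * b) := by
            apply mul_le_mul _ c3 h0e (by positivity)
            exact mul_le_mul c1 c2 h0e (by positivity)
        _ = 128 * ((F.card : ℝ) * ((b : ℝ) * a)) * ((m : ℝ) * n) := by ring
        _ ≤ 128 * (4 * (p : ℝ) * p * ((m : ℝ) * n)) * ((m : ℝ) * n) := by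
            have h1 : (0 : ℝ) ≤ 128 * ((m : ℝ) * n) := by positivity
            nlinarith [c4, hmn0]
        _ = 512 * (p : ℝ) ^ 2 * ((m : ℝ) * n) ^ 2 := by ring
    set X : ℝ := ((m : ℝ) * n) ^ ((2 : ℝ) / 3) with hXdef
    have hX3 : X ^ 3 = ((m : ℝ) * n) ^ 2 := by
      rw [hXdef, ← Real.rpow_natCast (((m : ℝ) * n) ^ ((2 : ℝ) / 3)) 3,
        ← Real.rpow_mul hmn0]
      norm_num
    have hp2 : (2 : ℝ) ≤ (p : ℝ) := by exact_mod_cast hp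
    have hcube : (e : ℝ) ^ 3 ≤ (144 * (p : ℝ) ^ 3 * X) ^ 3 := by
      have hpp : (p : ℝ) ^ 2 ≤ (p : ℝ) ^ 9 := by
        apply pow_le_pow_right₀ (by linarith) (by norm_num)
      have hM0 : (0 : ℝ) ≤ ((m : ℝ) * n) ^ 2 := by positivity
      have h2 := mul_le_mul_of_nonneg_right hpp hM0
      have h3 : (0 : ℝ) ≤ (p : ℝ) ^ 9 * ((m : ℝ) * n) ^ 2 := by positivity
      calc (e : ℝ) ^ 3 ≤ 512 * (p : ℝ) ^ 2 * ((m : ℝ) * n) ^ 2 := he3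
        _ ≤ 2985984 * (p : ℝ) ^ 9 * ((m : ℝ) * n) ^ 2 := by linarith
        _ = (144 * (p : ℝ) ^ 3 * X) ^ 3 := by rw [← hX3]; ring
    have hfin : (e : ℝ) ≤ 144 * (p : ℝ) ^ 3 * X := by
      have h1 : (0 : ℝ) ≤ 144 * (p : ℝ) ^ 3 * X := by positivity
      exact (pow_le_pow_iff_left₀ h0e h1 (by norm_num)).mp hcube
    have hm' : (0 : ℝ) ≤ 144 * (p : ℝ) ^ 3 * (m : ℝ) := by positivity
    have hn' : (0 : ℝ) ≤ 144 * (p : ℝ) ^ 3 * (n : ℝ) := by positivity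
    nlinarith [hfin, hm', hn']

/-- The vertex map for embedding a theta configuration. -/
def thetaMap {p : ℕ} (u : Fin m) (v : Fin n) (x : Fin p → Fin n) (y : Fin p → Fin m) :
    Bool ⊕ (Fin p × Fin (3 - 1)) → Fin m ⊕ Fin n := fun z =>
  match z with
  | Sum.inl false => Sum.inl u
  | Sum.inl true => Sum.inr v
  | Sum.inr (i, j) => if (j : ℕ) = 0 then Sum.inr (x i) else Sum.inl (y i)

lemma thetaMap_inl_false {p : ℕ} (u : Fin m) (v : Fin n) (x : Fin p → Fin n)
    (y : Fin p → Fin m) : thetaMap u v x y (Sum.inl false) = Sum.inl u := rfl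

lemma thetaMap_inl_true {p : ℕ} (u : Fin m) (v : Fin n) (x : Fin p → Fin n)
    (y : Fin p → Fin m) : thetaMap u v x y (Sum.inl true) = Sum.inr v := rfl

lemma thetaMap_inr {p : ℕ} (u : Fin m) (v : Fin n) (x : Fin p → Fin n)
    (y : Fin p → Fin m) (i : Fin p) (j : Fin (3 - 1)) :
    thetaMap u v x y (Sum.inr (i, j)) =
      if (j : ℕ) = 0 then Sum.inr (x i) else Sum.inl (y i) := rfl

/-- From a theta configuration in the edge set to a genuine copy of the theta graph. -/
lemma hasTheta_contains {p : ℕ} {G : SimpleGraph (Fin m ⊕ Fin n)}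
    {E : Finset (Fin m × Fin n)}
    (hE : ∀ a b, (a, b) ∈ E → G.Adj (Sum.inl a) (Sum.inr b))
    (h : HasTheta p E) : G.Contains (thetaGraph 3 p) := by
  obtain ⟨u, v, x, y, hxinj, hyinj, hxv, hyu, hedge⟩ := h
  refine ⟨⟨thetaMap u v x y, ?_⟩, ?_⟩
  · -- graph homomorphism
    intro z w hzw
    rw [thetaGraph, SimpleGraph.fromRel_adj] at hzw
    obtain ⟨hne, hr⟩ := hzw
    rcases z with b | ⟨i, j⟩ <;> rcases w with c | ⟨i', j'⟩
    · exact absurd hr (by rintro (h | h) <;> exact h)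
    · rcases hr with hr | hr
      · rcases hr with ⟨rfl, hj⟩ | ⟨rfl, hj⟩
        · rw [thetaMap_inl_false, thetaMap_inr, if_pos hj]
          exact hE _ _ (hedge i').1
        · have hj1 : ¬ ((j' : ℕ) = 0) := by omega
          rw [thetaMap_inl_true, thetaMap_inr, if_neg hj1]
          exact (hE _ _ (hedge i').2.2).symm
      · exact hr.elim
    · rcases hr with hr | hr
      · exact hr.elim
      · rcases hr with ⟨rfl, hj⟩ | ⟨rfl, hj⟩
        · rw [thetaMap_inl_false, thetaMap_inr, if_pos hj]
          exact (hE _ _ (hedge i).1).symm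
        · have hj1 : ¬ ((j : ℕ) = 0) := by omega
          rw [thetaMap_inl_true, thetaMap_inr, if_neg hj1]
          exact hE _ _ (hedge i).2.2
    · rcases hr with ⟨rfl, hj⟩ | ⟨rfl, hj⟩
      · have hj0 : (j : ℕ) = 0 := by
          have := j.isLt
          have := j'.isLt
          omega
        have hj1 : ¬ ((j' : ℕ) = 0) := by omega
        rw [thetaMap_inr, thetaMap_inr, if_pos hj0, if_neg hj1]
        exact (hE _ _ (hedge i).2.1).symm
      · have hj0 : (j' : ℕ) = 0 := by
          have := j.isLt
          have := j'.isLt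
          omega
        have hj1 : ¬ ((j : ℕ) = 0) := by omega
        rw [thetaMap_inr, thetaMap_inr, if_pos hj0, if_neg hj1]
        exact hE _ _ (hedge i').2.1
  · -- injectivity
    intro z w hzw
    replace hzw : thetaMap u v x y z = thetaMap u v x y w := hzw
    rcases z with b | ⟨i, j⟩ <;> rcases w with c | ⟨i', j'⟩
    · rcases b <;> rcases c
      · rfl
      · rw [thetaMap_inl_false, thetaMap_inl_true] at hzw
        exact absurd hzw (by simp)
      · rw [thetaMap_inl_false, thetaMap_inl_true] at hzw
        exact absurd hzw (by simp)
      · rfl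
    · exfalso
      by_cases hj' : (j' : ℕ) = 0
      · rw [thetaMap_inr, if_pos hj'] at hzw
        rcases b
        · rw [thetaMap_inl_false] at hzw
          simp at hzw
        · rw [thetaMap_inl_true] at hzw
          simp only [Sum.inr.injEq] at hzw
          exact hxv i' hzw.symm
      · rw [thetaMap_inr, if_neg hj'] at hzw
        rcases b
        · rw [thetaMap_inl_false] at hzw
          simp only [Sum.inl.injEq] at hzw
          exact hyu i' hzw.symm
        · rw [thetaMap_inl_true] at hzw
          simp at hzw
    · exfalso
      by_cases hj : (j : ℕ) = 0
      · rw [thetaMap_inr, if_pos hj] at hzw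
        rcases c
        · rw [thetaMap_inl_false] at hzw
          simp at hzw
        · rw [thetaMap_inl_true] at hzw
          simp only [Sum.inr.injEq] at hzw
          exact hxv i hzw
      · rw [thetaMap_inr, if_neg hj] at hzw
        rcases c
        · rw [thetaMap_inl_false] at hzw
          simp only [Sum.inl.injEq] at hzw
          exact hyu i hzw
        · rw [thetaMap_inl_true] at hzw
          simp at hzw
    · rw [thetaMap_inr, thetaMap_inr] at hzw
      by_cases hj : (j : ℕ) = 0 <;> by_cases hj' : (j' : ℕ) = 0
      · rw [if_pos hj, if_pos hj'] at hzw
        simp only [Sum.inr.injEq] at hzw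
        have hii : i = i' := hxinj hzw
        subst hii
        have hjj : j = j' := Fin.ext (by omega)
        rw [hjj]
      · rw [if_pos hj, if_neg hj'] at hzw
        simp at hzw
      · rw [if_neg hj, if_pos hj'] at hzw
        simp at hzw
      · rw [if_neg hj, if_neg hj'] at hzw
        simp only [Sum.inl.injEq] at hzw
        have hii : i = i' := hyinj hzw
        subst hii
        have hjj : j = j' := Fin.ext (by
          have := j.isLt
          have := j'.isLt
          omega)
        rw [hjj]

/-- translation of the edge count. -/
lemma edge_count (G : SimpleGraph (Fin m ⊕ Fin n)) [DecidableRel G.Adj]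
    (hsub : G ≤ completeBipartiteGraph (Fin m) (Fin n)) :
    G.edgeSet.ncard = ((Finset.univ : Finset (Fin m × Fin n)).filter fun ab =>
      G.Adj (Sum.inl ab.1) (Sum.inr ab.2)).card := by
  classical
  set E := (Finset.univ : Finset (Fin m × Fin n)).filter fun ab =>
      G.Adj (Sum.inl ab.1) (Sum.inr ab.2) with hEdef
  have himg : G.edgeSet = ↑(E.image fun ab => s(Sum.inl ab.1, Sum.inr ab.2)) := by
    ext e
    induction e with
    | _ z w =>
      simp only [SimpleGraph.mem_edgeSet, Finset.coe_image, Set.mem_image, Finset.mem_coe,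
        hEdef, Finset.mem_filter, Finset.mem_univ, true_and]
      constructor
      · intro hadj
        rcases z with a | b <;> rcases w with a' | b'
        · exact absurd (hsub hadj) (by simp)
        · exact ⟨(a, b'), hadj, rfl⟩
        · exact ⟨(a', b), hadj.symm, Sym2.eq_swap⟩
        · exact absurd (hsub hadj) (by simp)
      · rintro ⟨⟨a, b⟩, hadj, heq⟩
        have h2 : s(Sum.inl a, Sum.inr b) ∈ G.edgeSet := hadj
        rw [heq] at h2
        exact h2
  rw [himg, Set.ncard_coe_finset]
  apply Finset.card_image_of_injOn
  intro s _ t _ h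
  rw [Sym2.eq_iff] at h
  rcases h with ⟨h1, h2⟩ | ⟨h1, h2⟩
  · have ha : s.1 = t.1 := by simpa using h1
    have hb : s.2 = t.2 := by simpa using h2
    exact Prod.ext ha hb
  · exact absurd h1 (by simp)

end ThetaAux

/-- For all $m, n ≥ 2$ and $p ≥ 2$, $z(m, n, θ_{3,p}) ≤ 144 p^3 ((mn)^{2/3} + m + n)$. -/
theorem z_theta3_upper (p : ℕ) (hp : 2 ≤ p) (m n : ℕ) (hm : 2 ≤ m) (hn : 2 ≤ n) :
    (zNum m n (thetaGraph 3 p) : ℝ) ≤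
      144 * (p : ℝ) ^ 3 * (((m : ℝ) * n) ^ ((2 : ℝ) / 3) + m + n) := by
  classical
  set RHS : ℝ := 144 * (p : ℝ) ^ 3 * (((m : ℝ) * n) ^ ((2 : ℝ) / 3) + m + n) with hRHSdef
  have hRHS0 : 0 ≤ RHS := by
    rw [hRHSdef]
    positivity
  set S : Set ℕ := {N : ℕ | ∃ G : SimpleGraph (Fin m ⊕ Fin n),
    G ≤ completeBipartiteGraph (Fin m) (Fin n) ∧ ¬ G.Contains (thetaGraph 3 p) ∧
    G.edgeSet.ncard = N} with hSdef
  have hbound : ∀ N ∈ S, (N : ℝ) ≤ RHS := by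
    rintro N ⟨G, hsub, hnc, rfl⟩
    letI : DecidableRel G.Adj := Classical.decRel _
    rw [ThetaAux.edge_count G hsub]
    apply ThetaAux.core hp
    intro hth
    apply hnc
    apply ThetaAux.hasTheta_contains (G := G) ?_ hth
    intro a b hab
    simp only [Finset.mem_filter] at hab
    exact hab.2
  have hSne : S.Nonempty := by
    refine ⟨0, ⊥, bot_le, ?_, by simp⟩
    rintro ⟨f, -⟩
    have hadj : (thetaGraph 3 p).Adj (Sum.inl false)
        (Sum.inr (⟨0, by omega⟩, ⟨0, by norm_num⟩)) := by
      rw [thetaGraph, SimpleGraph.fromRel_adj]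
      refine ⟨by simp, ?_⟩
      left
      left
      exact ⟨rfl, rfl⟩
    exact f.map_adj hadj
  have hub : ∀ N ∈ S, N ≤ Nat.floor RHS := fun N hN => Nat.le_floor (hbound N hN)
  have hsup : sSup S ≤ Nat.floor RHS := csSup_le hSne hub
  calc (zNum m n (thetaGraph 3 p) : ℝ) = ((sSup S : ℕ) : ℝ) := rfl
    _ ≤ ((Nat.floor RHS : ℕ) : ℝ) := Nat.cast_le.mpr hsup
    _ ≤ RHS := Nat.floor_le hRHS0
end
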